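/- Let G be a Lie group and U ⊆ G an open connected subset with 1 ∈ U that has products connected to the axes. Let w and w' be U-words such that w' is an elementary contraction of w. Then there is a finite sequence of elementary expansions starting at w and ending at a U-word obtained from w' by inserting, at some position, a block (a₁, …, aₙ, aₙ⁻¹, …, a₁⁻¹) whose letters aᵢ are invertible elements of U. -/

import Mathlib

/-- Elementary contraction of a word over `U`: two adjacent letters `a, b ∈ U` are replaced
by the single letter `a * b`, provided `a * b ∈ U`. -/
def Contracts {G : Type*} [Group G] (U : Set G) (w w' : List G) : Prop :=
  ∃ (l₁ l₂ : List G) (a b : G), a ∈ U ∧ b ∈ U ∧ a * b ∈ U ∧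
    w = l₁ ++ a :: b :: l₂ ∧ w' = l₁ ++ (a * b) :: l₂

/-- Elementary expansion: the inverse operation of contraction. -/
def Expands {G : Type*} [Group G] (U : Set G) (w w' : List G) : Prop :=
  Contracts U w' w

/-- The block `(a₁, …, aₙ, aₙ⁻¹, …, a₁⁻¹)` built from the list `a = [a₁, …, aₙ]`. -/
def Block {G : Type*} [Group G] (a : List G) : List G :=
  a ++ (a.reverse.map fun x => x⁻¹)

/-- `U` has products connected to the axes: for all `a, b ∈ U` with `a * b ∈ U` there is a
continuous path in `U` from `1` to `a` that can be right-translated by `b` within `U`, or a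
continuous path in `U` from `1` to `b` that can be left-translated by `a` within `U`. -/
def ProductsConnectedToAxes {G : Type*} [Group G] [TopologicalSpace G] (U : Set G) : Prop :=
  ∀ a ∈ U, ∀ b ∈ U, a * b ∈ U →
    (∃ γ : Path (1 : G) a, ∀ t, γ t ∈ U ∧ γ t * b ∈ U) ∨
    (∃ δ : Path (1 : G) b, ∀ t, δ t ∈ U ∧ a * δ t ∈ U)

/- ### Auxiliary lemmas -/

lemma contracts_step {G : Type*} [Group G] {U : Set G} {a b : G} (l r : List G)
    (ha : a ∈ U) (hb : b ∈ U) (hab : a * b ∈ U) :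
    Contracts U (l ++ a :: b :: r) (l ++ (a * b) :: r) :=
  ⟨l, r, a, b, ha, hb, hab, rfl, rfl⟩

lemma chain_absorb_right {G : Type*} [Group G] (U : Set G) (q w : ℕ → G) (l r : List G) :
    ∀ n, (∀ k, k ≤ n → q k ∈ U) → (∀ k, k < n → w k ∈ U) →
      (∀ k, k < n → q (k+1) * w k = q k) →
      Relation.ReflTransGen (Contracts U)
        (l ++ q n :: ((List.range n).reverse.map w ++ r)) (l ++ q 0 :: r) := by
  intro n
  induction n with
  | zero =>
    intro _ _ _
    simp only [List.range_zero, List.reverse_nil, List.map_nil, List.nil_append]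
    exact Relation.ReflTransGen.refl
  | succ n ih =>
    intro hq hw hrel
    have e : (List.range (n+1)).reverse.map w = w n :: (List.range n).reverse.map w := by
      simp [List.range_succ]
    have step : Contracts U (l ++ q (n+1) :: ((List.range (n+1)).reverse.map w ++ r))
        (l ++ q n :: ((List.range n).reverse.map w ++ r)) := by
      rw [e]
      have h' := contracts_step (U := U) l ((List.range n).reverse.map w ++ r)
        (hq (n+1) le_rfl) (hw n (by omega))
        (by rw [hrel n (by omega)]; exact hq n (by omega))
      rw [hrel n (by omega)] at h'
      exact h'
    exact Relation.ReflTransGen.head step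
      (ih (fun k hk => hq k (by omega)) (fun k hk => hw k (by omega))
        (fun k hk => hrel k (by omega)))

lemma chain_absorb_left {G : Type*} [Group G] (U : Set G) (q w : ℕ → G) :
    ∀ n, ∀ (l r : List G), (∀ k, k ≤ n → q k ∈ U) → (∀ k, k < n → w k ∈ U) →
      (∀ k, k < n → w k * q (k+1) = q k) →
      Relation.ReflTransGen (Contracts U)
        (l ++ ((List.range n).map w ++ q n :: r)) (l ++ q 0 :: r) := by
  intro n
  induction n with
  | zero =>
    intro l r _ _ _
    simp only [List.range_zero, List.map_nil, List.nil_append]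
    exact Relation.ReflTransGen.refl
  | succ n ih =>
    intro l r hq hw hrel
    have e : (List.range (n+1)).map w = (List.range n).map w ++ [w n] := by
      simp [List.range_succ]
    have step : Contracts U (l ++ ((List.range (n+1)).map w ++ q (n+1) :: r))
        (l ++ ((List.range n).map w ++ q n :: r)) := by
      have h' := contracts_step (U := U) (l ++ (List.range n).map w) r
        (hw n (by omega)) (hq (n+1) le_rfl)
        (by rw [hrel n (by omega)]; exact hq n (by omega))
      rw [hrel n (by omega)] at h'
      rw [e]
      simpa [List.append_assoc] using h'
    exact Relation.ReflTransGen.head step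
      (ih l r (fun k hk => hq k (by omega)) (fun k hk => hw k (by omega))
        (fun k hk => hrel k (by omega)))

lemma chain_collapse_right {G : Type*} [Group G] (U : Set G) (q w : ℕ → G) :
    ∀ n, 1 ≤ n → ∀ (l r : List G),
      (∀ k, 1 ≤ k → k ≤ n → q k ∈ U) → (∀ k, k < n → w k ∈ U) →
      q 1 = w 0 → (∀ k, 1 ≤ k → k < n → q k * w k = q (k+1)) →
      Relation.ReflTransGen (Contracts U)
        (l ++ ((List.range n).map w ++ r)) (l ++ q n :: r) := by
  intro n
  induction n with
  | zero => omega
  | succ n ih =>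
    intro _ l r hq hw h1 hrel
    rcases Nat.eq_zero_or_pos n with hn | hn
    · subst hn
      simp only [show List.range 1 = [0] from rfl, List.map_cons, List.map_nil,
        List.singleton_append, ← h1]
      exact Relation.ReflTransGen.refl
    · have ihh := ih hn l (w n :: r) (fun k hk hk' => hq k hk (by omega))
        (fun k hk => hw k (by omega)) h1 (fun k hk hk' => hrel k hk (by omega))
      have e : (List.range (n+1)).map w ++ r = (List.range n).map w ++ (w n :: r) := by
        simp [List.range_succ]
      rw [e]
      refine Relation.ReflTransGen.tail ihh ?_
      have h' := contracts_step (U := U) l r (hq n hn (by omega)) (hw n (by omega))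
        (by rw [hrel n hn (by omega)]; exact hq (n+1) (by omega) le_rfl)
      rw [hrel n hn (by omega)] at h'
      exact h'

lemma chain_collapse_left {G : Type*} [Group G] (U : Set G) (q w : ℕ → G) :
    ∀ n, 1 ≤ n → ∀ (l r : List G),
      (∀ k, 1 ≤ k → k ≤ n → q k ∈ U) → (∀ k, k < n → w k ∈ U) →
      q 1 = w 0 → (∀ k, 1 ≤ k → k < n → w k * q k = q (k+1)) →
      Relation.ReflTransGen (Contracts U)
        (l ++ ((List.range n).reverse.map w ++ r)) (l ++ q n :: r) := by
  intro n
  induction n with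
  | zero => omega
  | succ n ih =>
    intro _ l r hq hw h1 hrel
    rcases Nat.eq_zero_or_pos n with hn | hn
    · subst hn
      simp only [show List.range 1 = [0] from rfl, List.reverse_cons, List.reverse_nil,
        List.nil_append, List.map_cons, List.map_nil, List.singleton_append, ← h1]
      exact Relation.ReflTransGen.refl
    · have e : (List.range (n+1)).reverse.map w = w n :: (List.range n).reverse.map w := by
        simp [List.range_succ]
      have ihh := ih hn (l ++ [w n]) r (fun k hk hk' => hq k hk (by omega))
        (fun k hk => hw k (by omega)) h1 (fun k hk hk' => hrel k hk (by omega))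
      have e2 : l ++ ((List.range (n+1)).reverse.map w ++ r)
          = (l ++ [w n]) ++ ((List.range n).reverse.map w ++ r) := by
        rw [e]; simp
      rw [e2]
      refine Relation.ReflTransGen.tail ihh ?_
      have h' := contracts_step (U := U) l r (hw n (by omega)) (hq n hn (by omega))
        (by rw [hrel n hn (by omega)]; exact hq (n+1) (by omega) le_rfl)
      rw [hrel n hn (by omega)] at h'
      simpa using h'

/-- Along any path one can choose a finite partition whose consecutive points have all four
quotients inside the open set `U` containing `1`. -/
lemma exists_fine_partition {G : Type*} [TopologicalSpace G] [Group G] [IsTopologicalGroup G]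
    {U : Set G} (hU : IsOpen U) (h1 : (1:G) ∈ U) {x y : G} (p : Path x y) :
    ∃ M : ℕ, 0 < M ∧ ∃ h : ℕ → G, h 0 = x ∧ h M = y ∧ (∀ i, ∃ s, h i = p s) ∧
      ∀ i, (h i)⁻¹ * h (i+1) ∈ U ∧ (h (i+1))⁻¹ * h i ∈ U ∧
           h (i+1) * (h i)⁻¹ ∈ U ∧ h i * (h (i+1))⁻¹ ∈ U := by
  have hc1 : Continuous fun st : unitInterval × unitInterval => (p st.1)⁻¹ * p st.2 :=
    ((p.continuous.comp continuous_fst).inv).mul (p.continuous.comp continuous_snd)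
  have hc2 : Continuous fun st : unitInterval × unitInterval => (p st.2)⁻¹ * p st.1 :=
    ((p.continuous.comp continuous_snd).inv).mul (p.continuous.comp continuous_fst)
  have hc3 : Continuous fun st : unitInterval × unitInterval => p st.2 * (p st.1)⁻¹ :=
    (p.continuous.comp continuous_snd).mul ((p.continuous.comp continuous_fst).inv)
  have hc4 : Continuous fun st : unitInterval × unitInterval => p st.1 * (p st.2)⁻¹ :=
    (p.continuous.comp continuous_fst).mul ((p.continuous.comp continuous_snd).inv)
  set W : Set (unitInterval × unitInterval) :=
    ((fun st : unitInterval × unitInterval => (p st.1)⁻¹ * p st.2) ⁻¹' U) ∩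
    (((fun st : unitInterval × unitInterval => (p st.2)⁻¹ * p st.1) ⁻¹' U) ∩
     (((fun st : unitInterval × unitInterval => p st.2 * (p st.1)⁻¹) ⁻¹' U) ∩
      ((fun st : unitInterval × unitInterval => p st.1 * (p st.2)⁻¹) ⁻¹' U))) with hWdef
  have hW : IsOpen W := (hU.preimage hc1).inter ((hU.preimage hc2).inter
    ((hU.preimage hc3).inter (hU.preimage hc4)))
  have hK : IsCompact (Set.range fun s : unitInterval => (s, s)) :=
    isCompact_range (continuous_id.prodMk continuous_id)
  have hKW : (Set.range fun s : unitInterval => (s, s)) ⊆ W := by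
    rintro _ ⟨s, rfl⟩
    refine ⟨?_, ?_, ?_, ?_⟩ <;> simp [h1]
  obtain ⟨ε, εpos, hε⟩ := hK.exists_thickening_subset_open hW hKW
  obtain ⟨n, hn⟩ := exists_nat_one_div_lt εpos
  set M : ℕ := n + 1 with hMdef
  set t : ℕ → unitInterval := fun i => Set.projIcc (0:ℝ) 1 zero_le_one (i / M) with htdef
  have key : ∀ i, (t i, t (i+1)) ∈ W := by
    intro i
    apply hε
    rw [Metric.mem_thickening_iff]
    refine ⟨(t i, t i), ⟨t i, rfl⟩, ?_⟩
    have hd : dist (t (i+1)) (t i) ≤ dist ((i+1 : ℕ) / M : ℝ) ((i : ℕ) / M : ℝ) := by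
      have h' := (LipschitzWith.projIcc (a := (0:ℝ)) (b := 1) zero_le_one).dist_le_mul
        ((i+1 : ℕ) / M : ℝ) ((i : ℕ) / M : ℝ)
      simpa only [NNReal.coe_one, one_mul] using h'
    have hdd : dist ((i+1 : ℕ) / M : ℝ) ((i : ℕ) / M : ℝ) = 1 / M := by
      rw [Real.dist_eq]
      push_cast
      rw [div_sub_div_same]
      simp
    have : dist (t (i+1)) (t i) < ε := by
      rw [hdd] at hd
      calc dist (t (i+1)) (t i) ≤ 1 / M := hd
        _ < ε := by push_cast [hMdef]; exact hn
    calc dist (t i, t (i+1)) (t i, t i) = max (dist (t i) (t i)) (dist (t (i+1)) (t i)) := by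
          rw [Prod.dist_eq]
      _ = dist (t (i+1)) (t i) := by simp [dist_nonneg]
      _ < ε := this
  refine ⟨M, Nat.succ_pos n, fun i => p (t i), ?_, ?_, fun i => ⟨t i, rfl⟩, fun i => key i⟩
  · have : t 0 = 0 := Subtype.ext (by simp [htdef, Set.coe_projIcc])
    show p (t 0) = x
    rw [this, p.source]
  · have hM0 : (M:ℝ)/M = 1 := div_self (by positivity)
    have : t M = 1 := Subtype.ext (by simp [htdef, Set.coe_projIcc, hM0])
    show p (t M) = y
    rw [this, p.target]

/-- **Turning a contraction into expansions at the cost of an inserted block.**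
Let `G` be a Lie group and `U ⊆ G` an open connected subset with `1 ∈ U` that has products
connected to the axes.  Let `w, w'` be `U`-words such that `w'` is an elementary contraction
of `w`.  Then there is a sequence of elementary expansions starting at `w` and ending at a
word obtained from `w'` by inserting, at some position, a block whose letters are invertible
elements of `U`. -/
theorem contraction_into_expansions
    {E : Type*} [NormedAddCommGroup E] [NormedSpace ℝ E]
    {H : Type*} [TopologicalSpace H] (I : ModelWithCorners ℝ E H)
    {G : Type*} [TopologicalSpace G] [ChartedSpace H G] [Group G] [LieGroup I (⊤ : ℕ∞) G]
    (U : Set G) (hUopen : IsOpen U) (hUconn : IsConnected U) (h1U : (1 : G) ∈ U)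
    (haxes : ProductsConnectedToAxes U)
    (w w' : List G) (hw : ∀ x ∈ w, x ∈ U) (hw' : ∀ x ∈ w', x ∈ U)
    (hcontr : Contracts U w w') :
    ∃ (l₁ l₂ : List G) (a : List G), w' = l₁ ++ l₂ ∧
      (∀ x ∈ a, x ∈ U ∧ x⁻¹ ∈ U) ∧
      Relation.ReflTransGen (Expands U) w (l₁ ++ Block a ++ l₂) := by
  haveI : IsTopologicalGroup G := topologicalGroup_of_lieGroup I (⊤ : ℕ∞)
  obtain ⟨l₁, l₂, x, y, hx, hy, hxy, hweq, hw'eq⟩ := hcontr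
  rcases haxes x hx y hy hxy with ⟨γ, hγ⟩ | ⟨δ, hδ⟩
  · -- left case: path from 1 to x, right-translatable by y
    obtain ⟨N, hN, h, h0, hNx, hmem, hkey⟩ := exists_fine_partition hUopen h1U γ
    have hhU : ∀ i, h i ∈ U ∧ h i * y ∈ U := fun i => by
      obtain ⟨s, hs⟩ := hmem i; rw [hs]; exact hγ s
    set u : ℕ → G := fun i => h (i+1) * (h i)⁻¹ with hu
    have huU : ∀ i, u i ∈ U := fun i => (hkey i).2.2.1
    have huinvU : ∀ i, (u i)⁻¹ ∈ U := fun i => by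
      have := (hkey i).2.2.2
      simpa [hu, mul_inv_rev] using this
    refine ⟨l₁, (x*y) :: l₂, (List.range N).reverse.map u, by simp [hw'eq], ?_, ?_⟩
    · intro z hz
      simp only [List.mem_map, List.mem_reverse, List.mem_range] at hz
      obtain ⟨i, -, rfl⟩ := hz
      exact ⟨huU i, huinvU i⟩
    · have hBlock : Block ((List.range N).reverse.map u)
          = (List.range N).reverse.map u ++ (List.range N).map (fun i => (u i)⁻¹) := by
        simp [Block, List.map_reverse, List.map_map, Function.comp_def]
      have s1 : Relation.ReflTransGen (Contracts U)
          ((l₁ ++ (List.range N).reverse.map u)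
            ++ ((List.range N).map (fun i => (u i)⁻¹) ++ (h N * y) :: l₂))
          ((l₁ ++ (List.range N).reverse.map u) ++ (h 0 * y) :: l₂) :=
        chain_absorb_left U (fun k => h k * y) (fun k => (u k)⁻¹) N _ l₂
          (fun k _ => (hhU k).2) (fun k _ => huinvU k)
          (fun k _ => by simp only [hu]; group)
      have s2 : Relation.ReflTransGen (Contracts U)
          (l₁ ++ ((List.range N).reverse.map u ++ y :: l₂)) (l₁ ++ h N :: y :: l₂) :=
        chain_collapse_left U h u N hN l₁ (y :: l₂)
          (fun k _ _ => (hhU k).1) (fun k _ => huU k)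
          (by simp [hu, h0]) (fun k _ _ => by simp [hu])
      have hchain : Relation.ReflTransGen (Contracts U)
          (l₁ ++ Block ((List.range N).reverse.map u) ++ ((x*y) :: l₂)) w := by
        rw [hBlock, hweq]
        have e1 : l₁ ++ ((List.range N).reverse.map u
              ++ (List.range N).map (fun i => (u i)⁻¹)) ++ ((x*y) :: l₂)
            = (l₁ ++ (List.range N).reverse.map u)
              ++ ((List.range N).map (fun i => (u i)⁻¹) ++ (h N * y) :: l₂) := by
          rw [hNx]; simp
        rw [e1]
        refine s1.trans ?_
        have e2 : (l₁ ++ (List.range N).reverse.map u) ++ (h 0 * y) :: l₂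
            = l₁ ++ ((List.range N).reverse.map u ++ y :: l₂) := by
          rw [h0]; simp
        rw [e2]
        have e3 : l₁ ++ h N :: y :: l₂ = l₁ ++ x :: y :: l₂ := by rw [hNx]
        exact e3 ▸ s2
      exact Relation.reflTransGen_swap.mpr hchain
  · -- right case: path from 1 to y, left-translatable by x
    obtain ⟨M, hM, h, h0, hMy, hmem, hkey⟩ := exists_fine_partition hUopen h1U δ
    have hhU : ∀ i, h i ∈ U ∧ x * h i ∈ U := fun i => by
      obtain ⟨s, hs⟩ := hmem i; rw [hs]; exact hδ s
    set v : ℕ → G := fun i => (h i)⁻¹ * h (i+1) with hv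
    have hvU : ∀ i, v i ∈ U := fun i => (hkey i).1
    have hvinvU : ∀ i, (v i)⁻¹ ∈ U := fun i => by
      have := (hkey i).2.1
      simpa [hv, mul_inv_rev] using this
    refine ⟨l₁ ++ [x*y], l₂, (List.range M).reverse.map (fun i => (v i)⁻¹),
      by simp [hw'eq], ?_, ?_⟩
    · intro z hz
      simp only [List.mem_map, List.mem_reverse, List.mem_range] at hz
      obtain ⟨i, -, rfl⟩ := hz
      exact ⟨hvinvU i, by simpa using hvU i⟩
    · have hBlock : Block ((List.range M).reverse.map (fun i => (v i)⁻¹))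
          = (List.range M).reverse.map (fun i => (v i)⁻¹) ++ (List.range M).map v := by
        simp [Block, List.map_reverse, List.map_map, Function.comp_def]
      have s1 : Relation.ReflTransGen (Contracts U)
          (l₁ ++ (x * h M) :: ((List.range M).reverse.map (fun i => (v i)⁻¹)
            ++ ((List.range M).map v ++ l₂)))
          (l₁ ++ (x * h 0) :: ((List.range M).map v ++ l₂)) :=
        chain_absorb_right U (fun k => x * h k) (fun k => (v k)⁻¹) l₁ _ M
          (fun k _ => (hhU k).2) (fun k _ => hvinvU k)
          (fun k _ => by simp only [hv]; group)
      have s2 : Relation.ReflTransGen (Contracts U)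
          ((l₁ ++ [x]) ++ ((List.range M).map v ++ l₂)) ((l₁ ++ [x]) ++ h M :: l₂) :=
        chain_collapse_right U h v M hM (l₁ ++ [x]) l₂
          (fun k _ _ => (hhU k).1) (fun k _ => hvU k)
          (by simp [hv, h0]) (fun k _ _ => by simp [hv])
      have hchain : Relation.ReflTransGen (Contracts U)
          ((l₁ ++ [x*y]) ++ Block ((List.range M).reverse.map (fun i => (v i)⁻¹)) ++ l₂) w := by
        rw [hBlock, hweq]
        have e1 : (l₁ ++ [x*y]) ++ ((List.range M).reverse.map (fun i => (v i)⁻¹)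
              ++ (List.range M).map v) ++ l₂
            = l₁ ++ (x * h M) :: ((List.range M).reverse.map (fun i => (v i)⁻¹)
              ++ ((List.range M).map v ++ l₂)) := by
          rw [hMy]; simp
        rw [e1]
        refine s1.trans ?_
        have e2 : l₁ ++ (x * h 0) :: ((List.range M).map v ++ l₂)
            = (l₁ ++ [x]) ++ ((List.range M).map v ++ l₂) := by
          rw [h0]; simp
        rw [e2]
        have e3 : (l₁ ++ [x]) ++ h M :: l₂ = l₁ ++ x :: y :: l₂ := by rw [hMy]; simp
        exact e3 ▸ s2
      exact Relation.reflTransGen_swap.mpr hchain
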